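/- There is an M_0 > 0 such that for every real M ≥ M_0 the following holds. Let {X_i}_{i≥1} be i.i.d. positive-integer-valued random variables, W_n = X_1 + ... + X_n, and let {Y_i}_{i≥1} be an independent copy of {X_i} with partial sums U_n = Y_1 + ... + Y_n. Fix a positive integer n, and for each nonnegative integer b ≤ n/M let T_{n-b} = max{i : W_i ≤ n-b}, L_n = {max(X_1,...,X_n) ≤ n/M}, and W'_{b,i} = W_{T_{n-b}} - W_{T_{n-b} - i} for 1 ≤ i ≤ T_{n-b}. Then P( {W_i : 1 ≤ i ≤ T_{n-b}} ∩ {b + W'_{b,i} : 1 ≤ i ≤ T_{n-b}} ∩ [1, n/3] = ∅ and L_n ) ≤ P( {W_i : i ≥ 1} ∩ {b + U_i : i ≥ 1} ∩ [1, n/3] = ∅ ). -/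

import Mathlib

open MeasureTheory ProbabilityTheory
open scoped ENNReal

lemma msOfCountable {Ω α : Type*} [MeasurableSpace Ω] [MeasurableSpace α]
    [MeasurableSingletonClass α] [Countable α] {f : Ω → α} (hf : Measurable f)
    (P : α → Prop) : MeasurableSet {ω | P (f ω)} :=
  hf ((Set.to_countable {a | P a}).measurableSet)

lemma tuple_law {Ω : Type} [MeasurableSpace Ω] {μ : Measure Ω}
    {ι : Type} {Z : ι → Ω → ℕ} (hZm : ∀ s, Measurable (Z s))
    (hindep : iIndepFun Z μ)
    (ν : Measure ℕ) [SigmaFinite ν] (hν : ∀ s, Measure.map (Z s) μ = ν)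
    {m : ℕ} (p : Fin m → ι) (hp : Function.Injective p) :
    Measure.map (fun ω r => Z (p r) ω) μ = Measure.pi (fun _ => ν) := by
  have hF : Measurable (fun ω (r : Fin m) => Z (p r) ω) :=
    measurable_pi_lambda _ (fun r => hZm (p r))
  refine (Measure.pi_eq fun s hs => ?_).symm
  rw [Measure.map_apply hF (MeasurableSet.univ_pi hs)]
  classical
  set sets' : ι → Set ℕ := Function.extend p s (fun _ => Set.univ) with hsets'
  have hext : ∀ r, sets' (p r) = s r := fun r => hp.extend_apply _ _ _
  have hpre : (fun ω (r : Fin m) => Z (p r) ω) ⁻¹' (Set.pi Set.univ s)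
      = ⋂ i ∈ Finset.image p Finset.univ, Z i ⁻¹' sets' i := by
    ext ω
    simp only [Set.mem_preimage, Set.mem_pi, Set.mem_univ, forall_true_left,
      Set.mem_iInter, Finset.mem_image, Finset.mem_univ, true_and]
    constructor
    · rintro h i ⟨r, rfl⟩
      rw [hext]; exact h r
    · intro h r
      have := h (p r) ⟨r, rfl⟩
      rwa [hext] at this
  have hmeas' : ∀ i ∈ Finset.image p Finset.univ, MeasurableSet (sets' i) := by
    intro i hi
    obtain ⟨r, _, rfl⟩ := Finset.mem_image.mp hi
    rw [hext]; exact hs r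
  rw [hpre, hindep.measure_inter_preimage_eq_mul _ hmeas',
    Finset.prod_image (fun x _ y _ h => hp h)]
  refine Finset.prod_congr rfl fun r _ => ?_
  rw [hext, ← hν (p r), Measure.map_apply (hZm (p r)) (hs r)]

lemma exchange_law {Ω : Type} [MeasurableSpace Ω] {μ : Measure Ω}
    {ι : Type} {Z : ι → Ω → ℕ} (hZm : ∀ s, Measurable (Z s))
    (hindep : iIndepFun Z μ)
    (ν : Measure ℕ) [SigmaFinite ν] (hν : ∀ s, Measure.map (Z s) μ = ν)
    {m : ℕ} (p q : Fin m → ι) (hp : Function.Injective p) (hq : Function.Injective q)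
    (Q : (Fin m → ℕ) → Prop) :
    μ {ω | Q (fun r => Z (p r) ω)} = μ {ω | Q (fun r => Z (q r) ω)} := by
  have hC : MeasurableSet {v : Fin m → ℕ | Q v} := (Set.to_countable _).measurableSet
  have h1 : {ω | Q (fun r => Z (p r) ω)} = (fun ω (r : Fin m) => Z (p r) ω) ⁻¹' {v | Q v} := rfl
  have h2 : {ω | Q (fun r => Z (q r) ω)} = (fun ω (r : Fin m) => Z (q r) ω) ⁻¹' {v | Q v} := rfl
  rw [h1, h2, ← Measure.map_apply (measurable_pi_lambda _ fun r => hZm (p r)) hC,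
    ← Measure.map_apply (measurable_pi_lambda _ fun r => hZm (q r)) hC,
    tuple_law hZm hindep ν hν p hp, tuple_law hZm hindep ν hν q hq]

/-- Corollary 2.3 of the paper: there is an `M₀ > 0` such that for all `M ≥ M₀`,
any i.i.d. positive integer gap sequence `X` (weights `W`) with an independent
copy `Y` (partial sums `U`), any `n ≥ 1` and any nonnegative integer `b ≤ n/M`,
`P({W i}_{1≤i≤T_{n-b}} ∩ {b + W'_{b,i}}_{1≤i≤T_{n-b}} ∩ [1, n/3] = ∅, Lₙ)
  ≤ P({W i} ∩ {b + U i} ∩ [1, n/3] = ∅)`. -/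
theorem stmt9 :
    ∃ M₀ : ℝ, 0 < M₀ ∧ ∀ M : ℝ, M₀ ≤ M →
    ∀ (Ω : Type) [MeasurableSpace Ω] (μ : Measure Ω), IsProbabilityMeasure μ →
    ∀ (X Y : ℕ → Ω → ℕ),
      (∀ i, Measurable (X i)) → (∀ i, Measurable (Y i)) →
      (∀ i ω, 0 < X i ω) → (∀ i ω, 0 < Y i ω) →
      iIndepFun (Sum.elim X Y) μ →
      (∀ s : ℕ ⊕ ℕ, IdentDistrib (Sum.elim X Y s) (X 1) μ μ) →
    ∀ (W U : ℕ → Ω → ℕ),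
      (∀ m ω, W m ω = ∑ i ∈ Finset.Icc 1 m, X i ω) →
      (∀ m ω, U m ω = ∑ i ∈ Finset.Icc 1 m, Y i ω) →
    ∀ n : ℕ, 1 ≤ n →
    ∀ b : ℕ, (b : ℝ) ≤ (n : ℝ) / M →
    ∀ (T : Ω → ℕ),
      (∀ ω, W (T ω) ω ≤ n - b ∧ ∀ i, W i ω ≤ n - b → i ≤ T ω) →
    ∀ (W' : ℕ → Ω → ℕ),
      (∀ i ω, W' i ω = W (T ω) ω - W (T ω - i) ω) →
    μ ({ω | ∀ i ∈ Finset.Icc 1 (T ω), ∀ i' ∈ Finset.Icc 1 (T ω),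
          ¬ (W i ω = b + W' i' ω ∧ 1 ≤ W i ω ∧ 3 * W i ω ≤ n)}
        ∩ {ω | ∀ i ∈ Finset.Icc 1 n, (X i ω : ℝ) ≤ (n : ℝ) / M})
      ≤ μ {ω | ∀ i : ℕ, 1 ≤ i → ∀ j : ℕ, 1 ≤ j →
          ¬ (W i ω = b + U j ω ∧ 1 ≤ W i ω ∧ 3 * W i ω ≤ n)} := by
  classical
  refine ⟨7, by norm_num, ?_⟩
  intro M hM Ω mΩ μ hμ X Y hXm hYm hXpos hYpos hindep hident W U hW hU n hn b hb T hT W' hW'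
  haveI := hμ
  have hMpos : (0:ℝ) < M := lt_of_lt_of_le (by norm_num) hM
  -- case n < M : the left event is empty
  by_cases hnM : (n:ℝ) < M
  · have hempty : ({ω | ∀ i ∈ Finset.Icc 1 (T ω), ∀ i' ∈ Finset.Icc 1 (T ω),
          ¬ (W i ω = b + W' i' ω ∧ 1 ≤ W i ω ∧ 3 * W i ω ≤ n)}
        ∩ {ω : Ω | ∀ i ∈ Finset.Icc 1 n, (X i ω : ℝ) ≤ (n : ℝ) / M}) = ∅ := by
      ext ω
      simp only [Set.mem_inter_iff, Set.mem_empty_iff_false, iff_false, not_and]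
      intro _ hL
      have h1 := hL 1 (Finset.mem_Icc.mpr ⟨le_refl 1, hn⟩)
      have h2 : (1:ℝ) ≤ (X 1 ω : ℝ) := by exact_mod_cast hXpos 1 ω
      have h3 : (n:ℝ)/M < 1 := (div_lt_one hMpos).mpr hnM
      linarith
    rw [hempty]
    simp
  push_neg at hnM
  have hn7 : 7 ≤ n := by exact_mod_cast le_trans hM hnM
  -- real to nat helper
  have hdiv : ∀ x : ℕ, (x:ℝ) ≤ (n:ℝ)/M → 7 * x ≤ n := by
    intro x hx
    have h1 : (n:ℝ)/M ≤ (n:ℝ)/7 := by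
      apply div_le_div_of_nonneg_left (Nat.cast_nonneg n) (by norm_num) hM
    have : (7:ℝ) * x ≤ n := by
      have := le_trans hx h1
      linarith
    exact_mod_cast this
  have hb7 : 7 * b ≤ n := hdiv b hb
  -- basic structure of W, U
  have hWm : ∀ i, Measurable (fun ω => W i ω) := by
    intro i
    have h : (fun ω => W i ω) = fun ω => ∑ k ∈ Finset.Icc 1 i, X k ω := funext fun ω => hW i ω
    rw [h]; exact Finset.measurable_sum _ fun k _ => hXm k
  have hUm : ∀ j, Measurable (fun ω => U j ω) := by
    intro j
    have h : (fun ω => U j ω) = fun ω => ∑ k ∈ Finset.Icc 1 j, Y k ω := funext fun ω => hU j ω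
    rw [h]; exact Finset.measurable_sum _ fun k _ => hYm k
  have hW0 : ∀ ω, W 0 ω = 0 := fun ω => by simp [hW]
  have hU0 : ∀ ω, U 0 ω = 0 := fun ω => by simp [hU]
  have hWsucc : ∀ j ω, W (j+1) ω = W j ω + X (j+1) ω := by
    intro j ω; rw [hW, hW, Finset.sum_Icc_succ_top (Nat.le_add_left 1 j)]
  have hUsucc : ∀ j ω, U (j+1) ω = U j ω + Y (j+1) ω := by
    intro j ω; rw [hU, hU, Finset.sum_Icc_succ_top (Nat.le_add_left 1 j)]
  have hWmono : ∀ ω, StrictMono (fun j => W j ω) := fun ω =>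
    strictMono_nat_of_lt_succ fun j => by
      rw [hWsucc]; exact Nat.lt_add_of_pos_right (hXpos _ ω)
  have hUmono : ∀ ω, StrictMono (fun j => U j ω) := fun ω =>
    strictMono_nat_of_lt_succ fun j => by
      rw [hUsucc]; exact Nat.lt_add_of_pos_right (hYpos _ ω)
  have hWle : ∀ j ω, j ≤ W j ω := by
    intro j ω
    induction j with
    | zero => exact Nat.zero_le _
    | succ k ih => rw [hWsucc]; have := hXpos (k+1) ω; omega
  have hUstep : ∀ ω (k : ℕ), 1 ≤ k → U k ω = U (k-1) ω + Y k ω := by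
    intro ω k hk
    have h := hUsucc (k-1) ω
    have hk1 : k - 1 + 1 = k := by omega
    rwa [hk1] at h
  -- the iid process
  set Z : ℕ ⊕ ℕ → Ω → ℕ := Sum.elim X Y with hZ
  have hZm : ∀ s, Measurable (Z s) := by rintro (i|j); exacts [hXm i, hYm j]
  set ν : Measure ℕ := Measure.map (X 1) μ with hνdef
  haveI hνP : IsProbabilityMeasure ν := Measure.isProbabilityMeasure_map (hXm 1).aemeasurable
  have hνs : ∀ s, Measure.map (Z s) μ = ν := fun s => (hident s).map_eq
  -- sigma (last index with 3 W ≤ n)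
  set σf : Ω → ℕ := fun ω => Nat.findGreatest (fun i => 3 * W i ω ≤ n) n with hσf
  have hσ1 : ∀ ω, 3 * W (σf ω) ω ≤ n := by
    intro ω
    exact Nat.findGreatest_spec (P := fun i => 3 * W i ω ≤ n) (m := 0) (Nat.zero_le n)
      (by simp [hW0])
  have hσ2 : ∀ ω, n < 3 * W (σf ω + 1) ω := by
    intro ω
    by_contra h
    push_neg at h
    have hle : σf ω + 1 ≤ n := by have := hWle (σf ω + 1) ω; omega
    have h2 := Nat.le_findGreatest (P := fun i => 3 * W i ω ≤ n) hle h
    have h3 : σf ω = Nat.findGreatest (fun i => 3 * W i ω ≤ n) n := rfl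
    omega
  -- T characterization
  have hTmax : ∀ ω, n - b < W (T ω + 1) ω := by
    intro ω
    by_contra h
    push_neg at h
    have := (hT ω).2 _ h
    omega
  -- the events
  set Eset : Set Ω := ({ω | ∀ i ∈ Finset.Icc 1 (T ω), ∀ i' ∈ Finset.Icc 1 (T ω),
          ¬ (W i ω = b + W' i' ω ∧ 1 ≤ W i ω ∧ 3 * W i ω ≤ n)}
        ∩ {ω : Ω | ∀ i ∈ Finset.Icc 1 n, (X i ω : ℝ) ≤ (n : ℝ) / M}) with hEset
  set Bset : Set Ω := {ω | ∀ i : ℕ, 1 ≤ i → ∀ j : ℕ, 1 ≤ j →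
          ¬ (W i ω = b + U j ω ∧ 1 ≤ W i ω ∧ 3 * W i ω ≤ n)} with hBset
  set Dset : ℕ → ℕ → Set Ω := fun a t => {ω | (a < t ∧ t ≤ n) ∧
      (W (a+1) ω + U (t-a-1) ω ≤ n - b ∧ n - b < W (a+1) ω + U (t-a) ω) ∧
      (3 * W a ω ≤ n ∧ n < 3 * W (a+1) ω)} with hDset
  set Jset : ℕ → ℕ → Set Ω := fun a t => {ω | (a < t ∧ t ≤ n) ∧
      (∀ i ∈ Finset.Icc 1 a, ∀ i' ∈ Finset.Icc 1 (t-a-1),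
        ¬ (W i ω = b + (W t ω - W (t-i') ω) ∧ 1 ≤ W i ω ∧ 3 * W i ω ≤ n)) ∧
      (W t ω ≤ n - b ∧ n - b < W (t+1) ω) ∧
      (3 * W a ω ≤ n ∧ n < 3 * W (a+1) ω) ∧
      ((X (a+1) ω : ℝ) ≤ (n:ℝ) / M)} with hJset
  set Jtil : ℕ → ℕ → Set Ω := fun a t => {ω | (a < t ∧ t ≤ n) ∧
      (∀ i ∈ Finset.Icc 1 a, ∀ j ∈ Finset.Icc 1 (t-a-1),
        ¬ (W i ω = b + U j ω ∧ 1 ≤ W i ω ∧ 3 * W i ω ≤ n)) ∧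
      (W (a+1) ω + U (t-a-1) ω ≤ n - b ∧ n - b < W (a+1) ω + U (t-a) ω) ∧
      (3 * W a ω ≤ n ∧ n < 3 * W (a+1) ω) ∧
      ((X (a+1) ω : ℝ) ≤ (n:ℝ) / M)} with hJtil
  have hBmeas : MeasurableSet Bset := by
    have h : Bset = ⋂ (i : ℕ) (j : ℕ), {ω | 1 ≤ i → 1 ≤ j →
        ¬ (W i ω = b + U j ω ∧ 1 ≤ W i ω ∧ 3 * W i ω ≤ n)} := by
      ext ω
      simp only [hBset, Set.mem_iInter, Set.mem_setOf_eq]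
      exact ⟨fun h i j hi hj => h i hi j hj, fun h i hi j hj => h i j hi hj⟩
    rw [h]
    refine MeasurableSet.iInter fun i => MeasurableSet.iInter fun j => ?_
    exact msOfCountable ((hWm i).prodMk (hUm j))
      (fun pr : ℕ × ℕ => 1 ≤ i → 1 ≤ j → ¬ (pr.1 = b + pr.2 ∧ 1 ≤ pr.1 ∧ 3 * pr.1 ≤ n))
  have hDmeas : ∀ a t, MeasurableSet (Dset a t) := by
    intro a t
    exact msOfCountable ((hWm a).prodMk ((hWm (a+1)).prodMk
        ((hUm (t-a-1)).prodMk (hUm (t-a)))))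
      (fun pr : ℕ × ℕ × ℕ × ℕ => (a < t ∧ t ≤ n) ∧
        (pr.2.1 + pr.2.2.1 ≤ n - b ∧ n - b < pr.2.1 + pr.2.2.2) ∧
        (3 * pr.1 ≤ n ∧ n < 3 * pr.2.1))
  have claimA : ∀ a t, (Eset ∩ {ω | σf ω = a ∧ T ω = t}) ⊆ Jset a t := by
    rintro a t ω ⟨⟨hE, hL⟩, hσa, hTt⟩
    have hWT : W t ω ≤ n - b := by rw [← hTt]; exact (hT ω).1
    have hWT1 : n - b < W (t+1) ω := by rw [← hTt]; exact hTmax ω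
    have hσan : 3 * W a ω ≤ n := by rw [← hσa]; exact hσ1 ω
    have hσa1 : n < 3 * W (a+1) ω := by rw [← hσa]; exact hσ2 ω
    have htn : t ≤ n := by have := hWle t ω; omega
    have hat' : a ≤ t := by
      rw [← hTt]
      exact (hT ω).2 a (by omega)
    have hat : a < t := by
      rcases Nat.lt_or_ge a t with h | h
      · exact h
      · exfalso
        have hta : a = t := by omega
        subst hta
        have htn1 : a + 1 ≤ n := by have := hWle a ω; omega
        have hXL := hL (a+1) (Finset.mem_Icc.mpr ⟨by omega, htn1⟩)
        have hX7 : 7 * X (a+1) ω ≤ n := hdiv _ hXL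
        have hws := hWsucc a ω
        omega
    refine ⟨⟨hat, htn⟩, ?_, ⟨hWT, hWT1⟩, ⟨hσan, hσa1⟩, ?_⟩
    · intro i hi i' hi'
      rw [Finset.mem_Icc] at hi hi'
      intro ⟨heq, h1, h3⟩
      refine hE i (Finset.mem_Icc.mpr ⟨hi.1, by omega⟩)
        i' (Finset.mem_Icc.mpr ⟨hi'.1, by omega⟩) ⟨?_, h1, h3⟩
      rw [hW' i' ω, hTt]
      exact heq
    · exact hL (a+1) (Finset.mem_Icc.mpr ⟨by omega, by omega⟩)
  have claimX : ∀ a t, μ (Jset a t) = μ (Jtil a t) := by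
    intro a t
    by_cases hg : a < t ∧ t ≤ n
    swap
    · have h1 : Jset a t = ∅ := by
        ext ω
        simp only [hJset, Set.mem_setOf_eq, Set.mem_empty_iff_false, iff_false]
        intro h; exact hg h.1
      have h2 : Jtil a t = ∅ := by
        ext ω
        simp only [hJtil, Set.mem_setOf_eq, Set.mem_empty_iff_false, iff_false]
        intro h; exact hg h.1
      rw [h1, h2]
    obtain ⟨hat, htn⟩ := hg
    have ham : a < n + 2 := by omega
    set pf : Fin (n+2) → ℕ ⊕ ℕ := fun r => Sum.inl (r.val + 1) with hpf
    set qf : Fin (n+2) → ℕ ⊕ ℕ := fun r =>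
      if r.val ≤ a then Sum.inl (r.val + 1)
      else if r.val < t then Sum.inr (t - r.val)
      else if r.val = t then Sum.inr (t - a)
      else Sum.inl (r.val + 1) with hqf
    have hpinj : Function.Injective pf := by
      intro r s h
      simp only [hpf, Sum.inl.injEq] at h
      exact Fin.ext (by omega)
    have hqinj : Function.Injective qf := by
      intro r s h
      simp only [hqf] at h
      have hr := r.isLt
      have hs := s.isLt
      apply Fin.ext
      split_ifs at h <;>
        first
          | (simp only [Sum.inl.injEq, Sum.inr.injEq] at h; omega)
          | (exact absurd h (by simp))
    set Sf : (Fin (n+2) → ℕ) → ℕ → ℕ :=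
      fun v j => ∑ i ∈ Finset.range j, (if h : i < n + 2 then v ⟨i, h⟩ else 0) with hSfdef
    set Q : (Fin (n+2) → ℕ) → Prop := fun v =>
      (∀ i ∈ Finset.Icc 1 a, ∀ i' ∈ Finset.Icc 1 (t-a-1),
        ¬ (Sf v i = b + (Sf v t - Sf v (t-i')) ∧ 1 ≤ Sf v i ∧ 3 * Sf v i ≤ n)) ∧
      (Sf v t ≤ n - b ∧ n - b < Sf v (t+1)) ∧
      (3 * Sf v a ≤ n ∧ n < 3 * Sf v (a+1)) ∧
      ((v ⟨a, ham⟩ : ℝ) ≤ (n:ℝ) / M) with hQ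
    have hSp : ∀ ω : Ω, ∀ j, j ≤ n + 2 → Sf (fun r => Z (pf r) ω) j = W j ω := by
      intro ω j hj
      rw [hW j ω, ← Finset.Ico_add_one_right_eq_Icc, Finset.sum_Ico_eq_sum_range]
      simp only [Nat.add_sub_cancel, hSfdef]
      refine Finset.sum_congr rfl fun i hi => ?_
      have him : i < n + 2 := lt_of_lt_of_le (Finset.mem_range.mp hi) hj
      rw [dif_pos him]
      show Z (pf ⟨i, him⟩) ω = X (1 + i) ω
      simp only [hpf, hZ, Sum.elim_inl]
      rw [Nat.add_comm 1 i]
    have hqval : ∀ (ω : Ω) (i : ℕ) (him : i < n + 2),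
        Z (qf ⟨i, him⟩) ω =
          if i ≤ a then X (i+1) ω else if i < t then Y (t-i) ω
          else if i = t then Y (t-a) ω else X (i+1) ω := by
      intro ω i him
      simp only [hqf, hZ]
      split_ifs <;> simp
    have hSq_low : ∀ ω : Ω, ∀ j, j ≤ a + 1 → Sf (fun r => Z (qf r) ω) j = W j ω := by
      intro ω j hj
      rw [hW j ω, ← Finset.Ico_add_one_right_eq_Icc, Finset.sum_Ico_eq_sum_range]
      simp only [Nat.add_sub_cancel, hSfdef]
      refine Finset.sum_congr rfl fun i hi => ?_
      have hir := Finset.mem_range.mp hi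
      have him : i < n + 2 := by omega
      rw [dif_pos him]
      show Z (qf ⟨i, him⟩) ω = X (1 + i) ω
      rw [hqval ω i him, if_pos (show i ≤ a by omega), Nat.add_comm 1 i]
    have hSq_mid : ∀ ω : Ω, ∀ j, a + 1 ≤ j → j ≤ t →
        Sf (fun r => Z (qf r) ω) j + U (t - j) ω = W (a+1) ω + U (t-a-1) ω := by
      intro ω j hj
      induction j, hj using Nat.le_induction with
      | base =>
        intro _
        rw [hSq_low ω (a+1) le_rfl, show t - (a+1) = t - a - 1 from by omega]
      | succ k hk ih =>
        intro hkt
        have hkt' : k ≤ t := by omega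
        have ihe := ih hkt'
        have hsum : Sf (fun r => Z (qf r) ω) (k+1)
            = Sf (fun r => Z (qf r) ω) k + Y (t - k) ω := by
          simp only [hSfdef]
          rw [Finset.sum_range_succ]
          congr 1
          have hkm : k < n + 2 := by omega
          rw [dif_pos hkm]
          show Z (qf ⟨k, hkm⟩) ω = Y (t - k) ω
          rw [hqval ω k hkm, if_neg (by omega), if_pos (by omega)]
        have hstep : U (t - k) ω = U (t - k - 1) ω + Y (t - k) ω := hUstep ω (t-k) (by omega)
        have htk : t - (k+1) = t - k - 1 := by omega
        rw [hsum, htk]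
        omega
    have hSq_t : ∀ ω : Ω, Sf (fun r => Z (qf r) ω) t = W (a+1) ω + U (t-a-1) ω := by
      intro ω
      have h := hSq_mid ω t (by omega) le_rfl
      rw [Nat.sub_self, hU0] at h
      omega
    have hSq_t1 : ∀ ω : Ω, Sf (fun r => Z (qf r) ω) (t+1) = W (a+1) ω + U (t-a) ω := by
      intro ω
      have hsum : Sf (fun r => Z (qf r) ω) (t+1)
          = Sf (fun r => Z (qf r) ω) t + Y (t-a) ω := by
        simp only [hSfdef]
        rw [Finset.sum_range_succ]
        congr 1
        have htm : t < n + 2 := by omega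
        rw [dif_pos htm]
        show Z (qf ⟨t, htm⟩) ω = Y (t - a) ω
        rw [hqval ω t htm, if_neg (by omega), if_neg (by omega), if_pos rfl]
      have hstep : U (t - a) ω = U (t - a - 1) ω + Y (t - a) ω := hUstep ω (t-a) (by omega)
      rw [hsum, hSq_t ω]
      omega
    have hJp : Jset a t = {ω | Q (fun r => Z (pf r) ω)} := by
      ext ω
      simp only [hJset, hQ, Set.mem_setOf_eq]
      have hpt := hSp ω t (by omega)
      have hpt1 := hSp ω (t+1) (by omega)
      have hpa := hSp ω a (by omega)
      have hpa1 := hSp ω (a+1) (by omega)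
      have hcoord : Z (pf (⟨a, ham⟩ : Fin (n+2))) ω = X (a+1) ω := by
        simp only [hpf, hZ, Sum.elim_inl]
      rw [hpt, hpt1, hpa, hpa1, hcoord]
      constructor
      · rintro ⟨hg, hc1, hc2, hc3, hc4⟩
        refine ⟨?_, hc2, hc3, hc4⟩
        intro i hi i' hi'
        have hi2 := Finset.mem_Icc.mp hi
        have hi2' := Finset.mem_Icc.mp hi'
        rw [hSp ω i (by omega), hSp ω (t - i') (by omega)]
        exact hc1 i hi i' hi'
      · rintro ⟨hc1, hc2, hc3, hc4⟩
        refine ⟨⟨hat, htn⟩, ?_, hc2, hc3, hc4⟩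
        intro i hi i' hi'
        have hi2 := Finset.mem_Icc.mp hi
        have hi2' := Finset.mem_Icc.mp hi'
        have h := hc1 i hi i' hi'
        rwa [hSp ω i (by omega), hSp ω (t - i') (by omega)] at h
    have hJq : Jtil a t = {ω | Q (fun r => Z (qf r) ω)} := by
      ext ω
      simp only [hJtil, hQ, Set.mem_setOf_eq]
      have hqt := hSq_t ω
      have hqt1 := hSq_t1 ω
      have hqa := hSq_low ω a (by omega)
      have hqa1 := hSq_low ω (a+1) le_rfl
      have hcoord : Z (qf (⟨a, ham⟩ : Fin (n+2))) ω = X (a+1) ω := by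
        rw [hqval ω a ham, if_pos le_rfl]
      rw [hqt, hqt1, hqa, hqa1, hcoord]
      constructor
      · rintro ⟨hg, hc1, hc2, hc3, hc4⟩
        refine ⟨?_, hc2, hc3, hc4⟩
        intro i hi i' hi'
        have hi2 := Finset.mem_Icc.mp hi
        have hi2' := Finset.mem_Icc.mp hi'
        have hsubst : W (a+1) ω + U (t-a-1) ω - Sf (fun r => Z (qf r) ω) (t - i')
            = U i' ω := by
          have hmid := hSq_mid ω (t - i') (by omega) (by omega)
          rw [show t - (t - i') = i' from by omega] at hmid
          omega
        rw [hSq_low ω i (by omega), hsubst]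
        exact hc1 i hi i' hi'
      · rintro ⟨hc1, hc2, hc3, hc4⟩
        refine ⟨⟨hat, htn⟩, ?_, hc2, hc3, hc4⟩
        intro i hi i' hi'
        have hi2 := Finset.mem_Icc.mp hi
        have hi2' := Finset.mem_Icc.mp hi'
        have hsubst : W (a+1) ω + U (t-a-1) ω - Sf (fun r => Z (qf r) ω) (t - i')
            = U i' ω := by
          have hmid := hSq_mid ω (t - i') (by omega) (by omega)
          rw [show t - (t - i') = i' from by omega] at hmid
          omega
        have h := hc1 i hi i' hi'
        rwa [hSq_low ω i (by omega), hsubst] at h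
    rw [hJp, hJq]
    exact exchange_law hZm hindep ν hνs pf qf hpinj hqinj Q
  have claimB : ∀ a t, Jtil a t ⊆ Bset ∩ Dset a t := by
    rintro a t ω ⟨hg, hc1, hc2, hc3, hc4⟩
    refine ⟨?_, hg, hc2, hc3⟩
    intro i hi j hj hbad
    obtain ⟨heq, h1, h3⟩ := hbad
    have hia : i ≤ a := by
      by_contra hia
      have hmo := (hWmono ω).monotone (show a + 1 ≤ i by omega)
      omega
    by_cases hjt : j ≤ t - a - 1
    · exact hc1 i (Finset.mem_Icc.mpr ⟨hi, hia⟩) j (Finset.mem_Icc.mpr ⟨hj, hjt⟩) ⟨heq, h1, h3⟩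
    · have hUj : U (t-a) ω ≤ U j ω := (hUmono ω).monotone (by omega)
      have hX7 : 7 * X (a+1) ω ≤ n := hdiv _ hc4
      have hws := hWsucc a ω
      omega
  have claimC : Pairwise (Function.onFun Disjoint (fun p : ℕ × ℕ => Bset ∩ Dset p.1 p.2)) := by
    rintro ⟨a, t⟩ ⟨a', t'⟩ hne
    simp only [Function.onFun]
    rw [Set.disjoint_left]
    rintro ω ⟨-, hg, hc2, hc3⟩ ⟨-, hg', hc2', hc3'⟩
    have haa : a = a' := by
      by_contra h
      rcases Nat.lt_or_ge a a' with hlt | hge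
      · have hmo := (hWmono ω).monotone (show a + 1 ≤ a' by omega)
        omega
      · have hmo := (hWmono ω).monotone (show a' + 1 ≤ a by omega)
        omega
    subst haa
    have htt : t ≠ t' := fun h => hne (by rw [h])
    rcases Nat.lt_or_ge t t' with hlt | hge
    · have hmo := (hUmono ω).monotone (show t - a ≤ t' - a - 1 by omega)
      omega
    · have hmo := (hUmono ω).monotone (show t' - a ≤ t - a - 1 by omega)
      omega
  show μ Eset ≤ μ Bset
  calc μ Eset ≤ ∑' p : ℕ × ℕ, μ (Eset ∩ {ω | σf ω = p.1 ∧ T ω = p.2}) := by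
        have hcover : Eset ⊆ ⋃ p : ℕ × ℕ, Eset ∩ {ω | σf ω = p.1 ∧ T ω = p.2} := by
          intro ω hω
          exact Set.mem_iUnion.mpr ⟨⟨σf ω, T ω⟩, hω, rfl, rfl⟩
        exact le_trans (measure_mono hcover) (measure_iUnion_le _)
    _ ≤ ∑' p : ℕ × ℕ, μ (Jtil p.1 p.2) := by
        refine ENNReal.tsum_le_tsum fun p => ?_
        rw [← claimX p.1 p.2]
        exact measure_mono (claimA p.1 p.2)
    _ ≤ ∑' p : ℕ × ℕ, μ (Bset ∩ Dset p.1 p.2) :=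
        ENNReal.tsum_le_tsum fun p => measure_mono (claimB p.1 p.2)
    _ = μ (⋃ p : ℕ × ℕ, Bset ∩ Dset p.1 p.2) :=
        (measure_iUnion claimC (fun p => hBmeas.inter (hDmeas p.1 p.2))).symm
    _ ≤ μ Bset := measure_mono (Set.iUnion_subset fun p => Set.inter_subset_left)
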